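/- arXiv:1308.6796 — 4 statements merged into one kernel-verified Lean document; each statement's English description precedes it below -/
import Mathlib

section
/- Let $n \geq 4$, $m < d$ be natural numbers. Define $e = \lfloor (\binom{d+n}{n} - \binom{m+n-1}{n})/(d+1) \rfloor$ and $r = \binom{d+n}{n} - \binom{m+n-1}{n} - e(d+1)$, and then $e' = \lfloor (\binom{d-1+n}{n} - \binom{m+n-1}{n} - r)/d \rfloor$. Then $e' \geq 0$. -/
theorem stmt_0 (n m d : ℕ) (hn : 4 ≤ n) (hm : 1 ≤ m) (hmd : m < d)
    (e e' : ℤ) (r : ℤ)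
    (he : e = ⌊((((d + n).choose n : ℚ)) - ((m + n - 1).choose n : ℚ)) / ((d : ℚ) + 1)⌋)
    (hr : r = ((d + n).choose n : ℤ) - ((m + n - 1).choose n : ℤ) - e * ((d : ℤ) + 1))
    (he' : e' = ⌊((((d - 1 + n).choose n : ℚ)) - ((m + n - 1).choose n : ℚ) - (r : ℚ)) / (d : ℚ)⌋) :
    0 ≤ e' := by
  obtain ⟨d', rfl⟩ : ∃ d', d = d' + 2 := ⟨d - 2, by omega⟩
  obtain ⟨n', rfl⟩ : ∃ n', n = n' + 4 := ⟨n - 4, by omega⟩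
  set N : ℤ := ((d' + 2 + (n' + 4)).choose (n' + 4) : ℤ)
    - ((m + (n' + 4) - 1).choose (n' + 4) : ℤ) with hN
  -- e is the integer division
  have key1 : ((((d' + 2 + (n' + 4)).choose (n' + 4) : ℚ))
      - ((m + (n' + 4) - 1).choose (n' + 4) : ℚ)) / ((d' : ℚ) + 2 + 1)
      = (N : ℚ) / ((d' + 3 : ℕ) : ℚ) := by
    push_cast [hN]; ring
  have heN : e = N / ((d' : ℤ) + 3) := by
    rw [he]; push_cast
    rw [key1, Rat.floor_intCast_div_natCast]
    norm_cast
  have hrmod : r = N % ((d' : ℤ) + 3) := by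
    rw [hr, heN, Int.emod_def]; push_cast; ring
  have hr0 : 0 ≤ r := hrmod ▸ Int.emod_nonneg N (by positivity)
  have hrlt : r < (d' : ℤ) + 3 := hrmod ▸ Int.emod_lt_of_pos N (by positivity)
  -- key combinatorial inequality
  have hkey : (m + (n' + 4) - 1).choose (n' + 4) + (d' + 2)
      ≤ (d' + 1 + (n' + 4)).choose (n' + 4) := by
    have h1 : d' + 1 + (n' + 4) = d' + n' + 4 + 1 := by omega
    have hpascal : (d' + n' + 4 + 1).choose (n' + 4)
        = (d' + n' + 4).choose (n' + 3) + (d' + n' + 4).choose (n' + 4) :=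
      Nat.choose_succ_succ _ (n' + 3)
    rw [h1, hpascal]
    have h2 : (m + (n' + 4) - 1).choose (n' + 4) ≤ (d' + n' + 4).choose (n' + 4) :=
      Nat.choose_le_choose _ (by omega)
    have h3 : d' + 2 ≤ (d' + n' + 4).choose (n' + 3) := by
      have hsymm : (d' + n' + 4).choose (n' + 3) = (d' + n' + 4).choose (d' + 1) := by
        rw [← Nat.choose_symm (show n' + 3 ≤ d' + n' + 4 by omega)]
        congr 1
        omega
      rw [hsymm]
      calc d' + 2 = (d' + 2).choose (d' + 1) := by
            rw [← Nat.choose_symm (show d' + 1 ≤ d' + 2 by omega)]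
            simp
        _ ≤ (d' + n' + 4).choose (d' + 1) := Nat.choose_le_choose _ (by omega)
    omega
  -- numerator of e' is nonnegative
  have hM : (0 : ℤ) ≤ ((d' + 1 + (n' + 4)).choose (n' + 4) : ℤ)
      - ((m + (n' + 4) - 1).choose (n' + 4) : ℤ) - r := by
    have h4 : ((m + (n' + 4) - 1).choose (n' + 4) : ℤ) + ((d' : ℤ) + 2)
        ≤ ((d' + 1 + (n' + 4)).choose (n' + 4) : ℤ) := by exact_mod_cast hkey
    omega
  have key2 : ((((d' + 1 + (n' + 4)).choose (n' + 4) : ℚ))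
      - ((m + (n' + 4) - 1).choose (n' + 4) : ℚ) - (r : ℚ)) / ((d' : ℚ) + 2)
      = ((((d' + 1 + (n' + 4)).choose (n' + 4) : ℤ)
      - ((m + (n' + 4) - 1).choose (n' + 4) : ℤ) - r : ℤ) : ℚ) / ((d' + 2 : ℕ) : ℚ) := by
    push_cast; ring
  have he'N : e' = (((d' + 1 + (n' + 4)).choose (n' + 4) : ℤ)
      - ((m + (n' + 4) - 1).choose (n' + 4) : ℤ) - r) / ((d' : ℤ) + 2) := by
    rw [he']; push_cast
    rw [key2, Rat.floor_intCast_div_natCast]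
    norm_cast
  rw [he'N]
  exact Int.ediv_nonneg hM (by positivity)
end

section
/- Let $n \geq 4$, $m < d$ be natural numbers. Define $e = \lfloor (\binom{d+n}{n} - \binom{m+n-1}{n})/(d+1) \rfloor$, $r = \binom{d+n}{n} - \binom{m+n-1}{n} - e(d+1)$, $e' = \lfloor (\binom{d-1+n}{n} - \binom{m+n-1}{n} - r)/d \rfloor$, and $r' = \binom{d-1+n}{n} - \binom{m+n-1}{n} - r - e'd$. Then $e - e' - 2r' \geq 0$. -/
lemma c2 (d : ℕ) : 2 * (d+1).choose 2 = d * (d+1) := by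
  induction d with
  | zero => rfl
  | succ k ih =>
    rw [show k+1+1 = (k+1)+1 from rfl, Nat.choose_succ_succ (k+1) 1,
      Nat.choose_one_right]
    nlinarith [ih]

lemma c3 (d : ℕ) : 6 * (d+2).choose 3 = d * (d+1) * (d+2) := by
  induction d with
  | zero => rfl
  | succ k ih =>
    rw [show k+1+2 = (k+2)+1 from rfl, Nat.choose_succ_succ (k+2) 2]
    have := c2 (k+1)
    nlinarith [ih, this]

lemma c4 (d : ℕ) : 24 * (d+3).choose 4 = d * (d+1) * (d+2) * (d+3) := by
  induction d with
  | zero => rfl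
  | succ k ih =>
    rw [show k+1+3 = (k+3)+1 from rfl, Nat.choose_succ_succ (k+3) 3]
    have := c3 (k+1)
    nlinarith [ih, this]

lemma key (d : ℕ) (hd : 2 ≤ d) :
    ∀ n : ℕ, 4 ≤ n → 2*(d:ℤ)^3 - 2*(d:ℤ)^2 - 3*(d:ℤ) + 1 ≤ ((n:ℤ)-1) * (Nat.choose (d - 1 + n) n : ℤ) := by
  intro n hn
  induction n, hn using Nat.le_induction with
  | base =>
    have h1 : d - 1 + 4 = d + 3 := by omega
    rw [h1]
    have := c4 d
    have hc : (24 : ℤ) * ((d+3).choose 4 : ℤ) = (d:ℤ) * (d+1) * (d+2) * (d+3) := by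
      exact_mod_cast congrArg (Nat.cast : ℕ → ℤ) this
    have hd2 : (2:ℤ) ≤ (d:ℤ) := by exact_mod_cast hd
    push_cast
    nlinarith [hc, hd2, sq_nonneg ((d:ℤ) - 5), sq_nonneg ((d:ℤ)^2 - 5*d)]
  | succ k hk ih =>
    have hstep : (Nat.choose (d-1+k) k : ℤ) ≤ (Nat.choose (d-1+(k+1)) (k+1) : ℤ) := by
      have : (d - 1 + (k+1)) = (d - 1 + k) + 1 := by omega
      rw [this, Nat.choose_succ_succ]
      push_cast
      nlinarith [Nat.cast_nonneg (α := ℤ) (Nat.choose (d-1+k) (k+1))]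
    have hpos : (0:ℤ) ≤ (Nat.choose (d-1+k) k : ℤ) := by positivity
    have hk4 : (4:ℤ) ≤ (k:ℤ) := by exact_mod_cast hk
    push_cast
    push_cast at ih
    nlinarith [ih, hstep, hpos, hk4]

set_option maxHeartbeats 1000000 in
theorem stmt_1 (n m d : ℕ) (hn : 4 ≤ n) (hm : 1 ≤ m) (hmd : m < d)
    (e e' : ℤ) (r r' : ℤ)
    (he : e = ⌊((((d + n).choose n : ℚ)) - ((m + n - 1).choose n : ℚ)) / ((d : ℚ) + 1)⌋)
    (hr : r = ((d + n).choose n : ℤ) - ((m + n - 1).choose n : ℤ) - e * ((d : ℤ) + 1))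
    (he' : e' = ⌊((((d - 1 + n).choose n : ℚ)) - ((m + n - 1).choose n : ℚ) - (r : ℚ)) / (d : ℚ)⌋)
    (hr' : r' = ((d - 1 + n).choose n : ℤ) - ((m + n - 1).choose n : ℤ) - r - e' * (d : ℤ)) :
    0 ≤ e - e' - 2 * r' := by
  have hd : 2 ≤ d := by omega
  have hdz : (2:ℤ) ≤ (d:ℤ) := by exact_mod_cast hd
  have hdq1 : (0:ℚ) < (d:ℚ) + 1 := by positivity
  have hdq : (0:ℚ) < (d:ℚ) := by exact_mod_cast (by omega : 0 < d)
  -- bounds on r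
  have h1 : (e:ℚ) ≤ (((d + n).choose n : ℚ) - ((m + n - 1).choose n : ℚ)) / ((d:ℚ)+1) :=
    he ▸ Int.floor_le _
  have h2 : (((d + n).choose n : ℚ) - ((m + n - 1).choose n : ℚ)) / ((d:ℚ)+1) < (e:ℚ) + 1 :=
    he ▸ Int.lt_floor_add_one _
  have h1' := (le_div_iff₀ hdq1).mp h1
  have h2' := (div_lt_iff₀ hdq1).mp h2
  have hrq : (r:ℚ) = ((d + n).choose n : ℚ) - ((m + n - 1).choose n : ℚ) - (e:ℚ) * ((d:ℚ)+1) := by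
    rw [hr]; push_cast; ring
  have hr0 : 0 ≤ r := by
    have : (0:ℚ) ≤ (r:ℚ) := by rw [hrq]; linarith
    exact_mod_cast this
  have hrd : r ≤ (d:ℤ) := by
    have : (r:ℚ) < (d:ℚ) + 1 := by rw [hrq]; linarith
    have h3 : r < (d:ℤ) + 1 := by exact_mod_cast this
    omega
  -- bounds on r'
  have g1 : (e':ℚ) ≤ (((d - 1 + n).choose n : ℚ) - ((m + n - 1).choose n : ℚ) - (r : ℚ)) / (d:ℚ) :=
    he' ▸ Int.floor_le _
  have g2 : (((d - 1 + n).choose n : ℚ) - ((m + n - 1).choose n : ℚ) - (r : ℚ)) / (d:ℚ) < (e':ℚ) + 1 :=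
    he' ▸ Int.lt_floor_add_one _
  have g1' := (le_div_iff₀ hdq).mp g1
  have g2' := (div_lt_iff₀ hdq).mp g2
  have hrq' : (r':ℚ) = ((d - 1 + n).choose n : ℚ) - ((m + n - 1).choose n : ℚ) - (r:ℚ) - (e':ℚ) * (d:ℚ) := by
    rw [hr']; push_cast; ring
  have hr'0 : 0 ≤ r' := by
    have : (0:ℚ) ≤ (r':ℚ) := by rw [hrq']; linarith
    exact_mod_cast this
  have hr'd : r' ≤ (d:ℤ) - 1 := by
    have : (r':ℚ) < (d:ℚ) := by rw [hrq']; linarith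
    have h3 : r' < (d:ℤ) := by exact_mod_cast this
    omega
  -- identity d * C(d+n,n) = (d+n) * C(d-1+n,n)
  have hidn := Nat.choose_mul_succ_eq (d-1+n) n
  have e1 : d-1+n+1 = d+n := by omega
  have e2 : d+n-n = d := by omega
  rw [e1, e2] at hidn
  have hid : ((d-1+n).choose n : ℤ) * ((d:ℤ) + (n:ℤ)) = ((d+n).choose n : ℤ) * (d:ℤ) := by
    exact_mod_cast congrArg (Nat.cast : ℕ → ℤ) hidn
  have hB : (1:ℤ) ≤ ((m+n-1).choose n : ℤ) := by
    exact_mod_cast Nat.choose_pos (by omega : n ≤ m+n-1)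
  have hkey := key d hd n hn
  have hexp : (d:ℤ)*((d:ℤ)+1)*(e - e' - 2*r') =
      ((n:ℤ)-1)*((d-1+n).choose n : ℤ) + ((m+n-1).choose n : ℤ) + r
        - (2*(d:ℤ)^2+(d:ℤ)-1)*r' := by
    linear_combination (d:ℤ)*hr - ((d:ℤ)+1)*hr' - hid
  by_contra hcon
  push_neg at hcon
  have ht : e - e' - 2*r' ≤ -1 := by omega
  nlinarith [hexp, hkey, hB, hr0, hr'0, hr'd, hdz,
    mul_le_mul_of_nonneg_left ht (by positivity : (0:ℤ) ≤ (d:ℤ)*((d:ℤ)+1)),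
    mul_le_mul_of_nonneg_left hr'd (by nlinarith : (0:ℤ) ≤ 2*(d:ℤ)^2+(d:ℤ)-1)]
end

section
/- Let $n \geq 4$, $m < d$ be natural numbers. Define $e = \lfloor (\binom{d+n}{n} - \binom{m+n-1}{n})/(d+1) \rfloor$, $r = \binom{d+n}{n} - \binom{m+n-1}{n} - e(d+1)$, $e' = \lfloor (\binom{d-1+n}{n} - \binom{m+n-1}{n} - r)/d \rfloor$, and $r' = \binom{d-1+n}{n} - \binom{m+n-1}{n} - r - e'd$. Then $e' \geq r'$. -/
theorem aux2' (d : ℕ) (hd : 2 ≤ d) : 2*d+2 ≤ (d+2).choose 2 := by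
  rw [Nat.choose_two_right, Nat.le_div_iff_mul_le (by norm_num)]
  have : d + 2 - 1 = d + 1 := by omega
  rw [this]; nlinarith

theorem aux3' : ∀ d, 4 ≤ d → d*d+d ≤ 1 + (d+2).choose 3 := by
  intro d hd
  induction d with
  | zero => omega
  | succ k ih =>
    rcases Nat.lt_or_ge k 4 with h | h
    · interval_cases k
      · omega
      · omega
      · omega
      · decide
    · have h1 := ih (by omega)
      have h2 : 2*k+2 ≤ (k+2).choose 2 := aux2' k (by omega)
      have h3 : (k+1+2).choose 3 = (k+2).choose 2 + (k+2).choose 3 := by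
        show (k+2+1).choose (2+1) = _
        rw [Nat.choose_succ_succ]
      nlinarith

-- key bound: (j+2)^2+(j+2) ≤ 1 + C(j+k+4, k+3), when k ≥ 1 or j ≥ 2
theorem keyb (j k : ℕ) (h : 1 ≤ k ∨ 2 ≤ j) :
    (j+2)*(j+2)+(j+2) ≤ 1 + (j+k+4).choose (k+3) := by
  rcases Nat.lt_or_ge j 2 with hj | hj
  · -- j = 0 or 1, k ≥ 1
    have hk : 1 ≤ k := by omega
    interval_cases j
    · -- C(k+4, k+3) = k+4
      have : (k+4).choose (k+3) = k+4 := by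
        have h1 : (k+4).choose (k+4-1) = (k+4).choose 1 := Nat.choose_symm (by omega)
        simpa using h1
      have e0 : 0+k+4 = k+4 := by omega
      rw [e0, this]
      omega
    · -- C(k+5, k+3) = C(k+5, 2) ≥ C(6,2) = 15
      have h1 : (1+k+4).choose (k+3) = (k+5).choose 2 := by
        have := Nat.choose_symm (n := k+5) (k := 2) (by omega)
        have e : k+5-2 = k+3 := by omega
        rw [e] at this
        rw [show 1+k+4 = k+5 by omega, ← this]
      have h2 : 15 ≤ (k+5).choose 2 := by
        calc (15:ℕ) = (6:ℕ).choose 2 := by decide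
        _ ≤ _ := Nat.choose_le_choose 2 (by omega)
      rw [h1]
      omega
  · -- j ≥ 2 : C(j+k+4, k+3) = C(j+k+4, j+1) ≥ C(j+4, j+1) = C(j+4,3)
    have h1 : (j+k+4).choose (k+3) = (j+k+4).choose (j+1) := by
      have := Nat.choose_symm (n := j+k+4) (k := j+1) (by omega)
      have e : j+k+4-(j+1) = k+3 := by omega
      rw [e] at this; rw [← this]
    have h2 : (j+4).choose (j+1) ≤ (j+k+4).choose (j+1) :=
      Nat.choose_le_choose _ (by omega)
    have h3 : (j+4).choose (j+1) = (j+4).choose 3 := by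
      have := Nat.choose_symm (n := j+4) (k := 3) (by omega)
      have e : j+4-3 = j+1 := by omega
      rw [e] at this; rw [← this]
    have h4 := aux3' (j+2) (by omega)
    have e2 : j+2+2 = j+4 := by omega
    rw [e2] at h4
    omega

theorem stmt_2 (n m d : ℕ) (hn : 4 ≤ n) (hm : 1 ≤ m) (hmd : m < d)
    (e e' : ℤ) (r r' : ℤ)
    (he : e = ⌊((((d + n).choose n : ℚ)) - ((m + n - 1).choose n : ℚ)) / ((d : ℚ) + 1)⌋)
    (hr : r = ((d + n).choose n : ℤ) - ((m + n - 1).choose n : ℤ) - e * ((d : ℤ) + 1))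
    (he' : e' = ⌊((((d - 1 + n).choose n : ℚ)) - ((m + n - 1).choose n : ℚ) - (r : ℚ)) / (d : ℚ)⌋)
    (hr' : r' = ((d - 1 + n).choose n : ℤ) - ((m + n - 1).choose n : ℤ) - r - e' * (d : ℤ)) :
    r' ≤ e' := by
  obtain ⟨k, rfl⟩ : ∃ k, n = k + 4 := ⟨n - 4, by omega⟩
  obtain ⟨j, rfl⟩ : ∃ j, d = j + 2 := ⟨d - 2, by omega⟩
  -- abbreviations
  set A : ℕ := (j + 2 + (k + 4)).choose (k + 4) with hA
  set B : ℕ := (m + (k + 4) - 1).choose (k + 4) with hB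
  set C : ℕ := (j + 2 - 1 + (k + 4)).choose (k + 4) with hC
  -- e, r as integer div/mod
  have he2 : e = ((A : ℤ) - B) / ((j + 3 : ℕ) : ℤ) := by
    rw [he, ← Rat.floor_intCast_div_natCast]
    congr 1
    push_cast
    ring
  have hrm : r = ((A : ℤ) - B) % ((j + 3 : ℕ) : ℤ) := by
    rw [hr, he2, Int.emod_def]
    push_cast
    ring
  have hr0 : 0 ≤ r := hrm ▸ Int.emod_nonneg _ (by positivity)
  have hrlt : r < (j : ℤ) + 3 := by
    rw [hrm]; have := Int.emod_lt_of_pos ((A : ℤ) - B) (b := ((j+3:ℕ):ℤ)) (by positivity)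
    push_cast at this ⊢; linarith
  -- e', r' as integer div/mod
  have he'2 : e' = ((C : ℤ) - B - r) / ((j + 2 : ℕ) : ℤ) := by
    rw [he', ← Rat.floor_intCast_div_natCast]
    congr 1
    push_cast
    ring
  have hr'm : r' = ((C : ℤ) - B - r) % ((j + 2 : ℕ) : ℤ) := by
    rw [hr', he'2, Int.emod_def]
    push_cast
    ring
  have hr'0 : 0 ≤ r' := hr'm ▸ Int.emod_nonneg _ (by positivity)
  have hr'lt : r' < (j : ℤ) + 2 := by
    rw [hr'm]; have := Int.emod_lt_of_pos ((C : ℤ) - B - r) (b := ((j+2:ℕ):ℤ)) (by positivity)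
    push_cast at this ⊢; linarith
  by_cases hs : k = 0 ∧ j ≤ 1
  · -- special small cases: n = 4, d ∈ {2,3}
    obtain ⟨rfl, hj⟩ := hs
    interval_cases j
    · -- d = 2, m = 1
      interval_cases m
      simp only [hA, hB, hC] at *
      norm_num [Nat.choose] at he hr he' hr'
      subst he; norm_num at hr
      subst hr; norm_num at he'
      subst he'; norm_num at hr'
      omega
    · -- d = 3, m ∈ {1, 2}
      interval_cases m <;>
      · simp only [hA, hB, hC] at *
        norm_num [Nat.choose] at he hr he' hr'
        subst he; norm_num at hr
        subst hr; norm_num at he'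
        subst he'; norm_num at hr'
        omega
  · -- general case: C - B ≥ (j+2)^2 + (j+2) - 1
    have hcond : 1 ≤ k ∨ 2 ≤ j := by omega
    have key := keyb j k hcond
    -- B ≤ C(j+k+4, k+4), Pascal: C(j+k+5, k+4) = C(j+k+4, k+3) + C(j+k+4, k+4)
    have hBle : B ≤ (j + k + 4).choose (k + 4) := by
      rw [hB]
      exact Nat.choose_le_choose _ (by omega)
    have hpas : (j + k + 5).choose (k + 4) =
        (j + k + 4).choose (k + 3) + (j + k + 4).choose (k + 4) := by
      show (j + k + 4 + 1).choose (k + 3 + 1) = _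
      rw [Nat.choose_succ_succ]
    have hCeq : C = (j + k + 5).choose (k + 4) := by
      rw [hC]; congr 1; omega
    have hkey2 : B + ((j+2)*(j+2) + (j+2)) ≤ 1 + C := by
      rw [hCeq, hpas]; omega
    -- so N' = C - B - r ≥ (j+2)^2 - 1
    have hN' : ((j:ℤ)+2)*((j:ℤ)+2) - 1 ≤ (C : ℤ) - B - r := by
      have : (B : ℤ) + ((j+2)*(j+2) + (j+2)) ≤ 1 + C := by exact_mod_cast hkey2
      push_cast at this
      linarith
    -- e' ≥ j+1 ≥ r'
    have hN'eq : (C : ℤ) - B - r = e' * ((j:ℤ)+2) + r' := by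
      rw [hr']; push_cast; ring
    have he'ge : (j : ℤ) + 1 ≤ e' := by
      have hmul : ((j:ℤ)+1) * ((j:ℤ)+2) ≤ e' * ((j:ℤ)+2) := by nlinarith
      exact le_of_mul_le_mul_right hmul (by positivity)
    linarith
end

section
/- For all natural numbers $n \geq 4$ and $d \geq 2$ with $m \leq d - 1$: $\binom{d-1+n}{n} - \binom{m+n-1}{n} - d - (d-1)d \geq \binom{d+n-2}{d-1} - d^2$, and moreover $\binom{d+n-2}{d-1} - d^2 \geq \binom{d+2}{3} - d^2 = \binom{d}{3} + \text{(nonnegative)}$, so that $\binom{d-1+n}{n} - \binom{m+n-1}{n} - d - (d-1)d \geq 0$. -/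
private lemma aux_base (d : ℕ) (hd : 2 ≤ d) : d ^ 2 ≤ (d + 2).choose 3 := by
  induction d with
  | zero => omega
  | succ d ih =>
    rcases Nat.lt_or_ge d 2 with h | h
    · interval_cases d <;> decide
    · have ih' := ih h
      have pascal : (d + 3).choose 3 = (d + 2).choose 2 + (d + 2).choose 3 :=
        Nat.choose_succ_succ (d + 2) 2
      have h2 : (d + 2).choose 2 = (d + 2) * (d + 1) / 2 := by
        rw [Nat.choose_two_right]
        congr 1
      have h3 : 2 * d + 1 ≤ (d + 2).choose 2 := by
        rw [h2]
        have : (4 * d + 2) / 2 ≤ (d + 2) * (d + 1) / 2 := by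
          apply Nat.div_le_div_right
          nlinarith
        omega
      have : (d + 1) ^ 2 ≤ (d + 2).choose 2 + (d + 2).choose 3 := by nlinarith
      calc (d + 1) ^ 2 ≤ (d + 2).choose 2 + (d + 2).choose 3 := this
        _ = (d + 3).choose 3 := pascal.symm
        _ = (d + 1 + 2).choose 3 := by ring_nf

private lemma aux (d : ℕ) (hd : 2 ≤ d) : ∀ k, 3 ≤ k → d ^ 2 ≤ (d - 1 + k).choose k := by
  intro k
  induction k with
  | zero => omega
  | succ k ih =>
    intro hk
    rcases Nat.lt_or_ge k 3 with h | h
    · have hk2 : k = 2 := by omega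
      subst hk2
      have e : d - 1 + 3 = d + 2 := by omega
      rw [e]
      exact aux_base d hd
    · have ih' := ih h
      have pascal : (d - 1 + k + 1).choose (k + 1)
          = (d - 1 + k).choose k + (d - 1 + k).choose (k + 1) :=
        Nat.choose_succ_succ (d - 1 + k) k
      have e : d - 1 + (k + 1) = d - 1 + k + 1 := by omega
      rw [e, pascal]
      omega

theorem stmt_6 (n m d : ℕ) (hn : 4 ≤ n) (hd : 2 ≤ d) (hm : 1 ≤ m) (hmd : m ≤ d - 1) :
    0 ≤ ((d - 1 + n).choose n : ℤ) - ((m + n - 1).choose n : ℤ) - (d : ℤ) - ((d : ℤ) - 1) * d := by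
  obtain ⟨n', rfl⟩ : ∃ n', n = n' + 1 := ⟨n - 1, by omega⟩
  obtain ⟨d', rfl⟩ : ∃ d', d = d' + 2 := ⟨d - 2, by omega⟩
  have hn' : 3 ≤ n' := by omega
  have key : (m + (n' + 1) - 1).choose (n' + 1) + (d' + 2) ^ 2
      ≤ (d' + 2 - 1 + (n' + 1)).choose (n' + 1) := by
    have e1 : d' + 2 - 1 + (n' + 1) = (d' + 1 + n') + 1 := by omega
    have e2 : m + (n' + 1) - 1 = m + n' := by omega
    rw [e1, e2, Nat.choose_succ_succ]
    simp only [Nat.succ_eq_add_one]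
    have h1 : (m + n').choose (n' + 1) ≤ (d' + 1 + n').choose (n' + 1) :=
      Nat.choose_le_choose _ (by omega)
    have h2 : (d' + 2) ^ 2 ≤ (d' + 1 + n').choose n' := by
      have := aux (d' + 2) (by omega) n' hn'
      have e : d' + 2 - 1 + n' = d' + 1 + n' := by omega
      rwa [e] at this
    omega
  have keyz : ((m + (n' + 1) - 1).choose (n' + 1) : ℤ) + ((d' : ℤ) + 2) ^ 2
      ≤ ((d' + 2 - 1 + (n' + 1)).choose (n' + 1) : ℤ) := by exact_mod_cast key
  push_cast
  push_cast at keyz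
  nlinarith [keyz]
end
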